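/- Let K ⊂ L be a field extension in which every element of L algebraic over K is separable over K. If the extension K ⊂ L has the linear local matching property, then it has the linear matching property. -/

import Mathlib

/-- `a : Fin n → L` is a basis of the `K`-subspace `A` of `L`. -/
def IsBasisOfSubspace {K L : Type*} [Field K] [Field L] [Algebra K L]
    (n : ℕ) (A : Submodule K L) (a : Fin n → L) : Prop :=
  LinearIndependent K a ∧ Submodule.span K (Set.range a) = A

/-- The basis `a` of `A` is matched to the basis `b` of `B`:
for all `x ∈ B` and all `i`, `a i * x ∈ A` implies that `x` lies in the hyperplane of `B`
spanned by the `b j`, `j ≠ i`. -/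
def FamMatched {K L : Type*} [Field K] [Field L] [Algebra K L]
    (A B : Submodule K L) {n : ℕ} (a b : Fin n → L) : Prop :=
  ∀ x ∈ B, ∀ i : Fin n, a i * x ∈ A → x ∈ Submodule.span K (b '' ({i}ᶜ : Set (Fin n)))

/-- `A` is matched to `B`: every basis of `A` can be matched to a basis of `B`. -/
def SubspaceMatched {K L : Type*} [Field K] [Field L] [Algebra K L]
    (A B : Submodule K L) : Prop :=
  ∀ (n : ℕ) (a : Fin n → L), IsBasisOfSubspace n A a →
    ∃ b : Fin n → L, IsBasisOfSubspace n B b ∧ FamMatched A B a b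

/-- `Ã` is `A`-matched to `B̃`: for every basis of `Ã` one can find a basis of `B̃`
with `aᵢ * bᵢ ∉ A` for all `i`. -/
def AMatched {K L : Type*} [Field K] [Field L] [Algebra K L]
    (A Atil Btil : Submodule K L) : Prop :=
  ∀ (n : ℕ) (a : Fin n → L), IsBasisOfSubspace n Atil a →
    ∃ b : Fin n → L, IsBasisOfSubspace n Btil b ∧ ∀ i, a i * b i ∉ A

/-- `A` is locally matched to `B`: for every intermediate field `K ⊆ H ⊊ L` with
`H ∩ B ≠ {0}` and `aH ⊆ A` for some `a ∈ A`, some non-zero subspace `Ã` of `A`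
is `A`-matched to `H ∩ B`. -/
def SubspaceLocallyMatched {K L : Type*} [Field K] [Field L] [Algebra K L]
    (A B : Submodule K L) : Prop :=
  ∀ H : IntermediateField K L, H ≠ ⊤ →
    Subalgebra.toSubmodule H.toSubalgebra ⊓ B ≠ ⊥ →
    (∃ a ∈ A, ∀ h ∈ H, a * h ∈ A) →
    ∃ Atil : Submodule K L, Atil ≤ A ∧ Atil ≠ ⊥ ∧
      AMatched A Atil (Subalgebra.toSubmodule H.toSubalgebra ⊓ B)

/-- `K ⊂ L` has the linear matching property: for every `n ≥ 1` and all `n`-dimensional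
`K`-subspaces `A, B` of `L` with `1 ∉ B`, `A` is matched to `B`. -/
def LinearMatchingProperty (K L : Type*) [Field K] [Field L] [Algebra K L] : Prop :=
  ∀ (n : ℕ), 1 ≤ n → ∀ A B : Submodule K L,
    Module.finrank K A = n → Module.finrank K B = n → (1 : L) ∉ B →
      SubspaceMatched A B

/-- `K ⊂ L` has the linear local matching property: for every `n ≥ 1` and all
`n`-dimensional `K`-subspaces `A, B` of `L` with `1 ∉ B`, `A` is locally matched to `B`. -/
def LinearLocalMatchingProperty (K L : Type*) [Field K] [Field L] [Algebra K L] : Prop :=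
  ∀ (n : ℕ), 1 ≤ n → ∀ A B : Submodule K L,
    Module.finrank K A = n → Module.finrank K B = n → (1 : L) ∉ B →
      SubspaceLocallyMatched A B


open Module Submodule

namespace MatchAux


open Module Submodule


variable {K L : Type*} [Field K] [Field L] [Algebra K L]

/-- The multiplicative stabilizer of a submodule, as a submodule. -/
def stabSubmodule (U : Submodule K L) : Submodule K L where
  carrier := {y : L | ∀ u ∈ U, u * y ∈ U}
  add_mem' := fun {a b} ha hb u hu => by
    rw [mul_add]; exact U.add_mem (ha u hu) (hb u hu)
  zero_mem' := fun u hu => by rw [mul_zero]; exact U.zero_mem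
  smul_mem' := fun c y hy u hu => by
    rw [Algebra.mul_smul_comm]; exact U.smul_mem c (hy u hu)

lemma mem_stabSubmodule {U : Submodule K L} {y : L} :
    y ∈ stabSubmodule U ↔ ∀ u ∈ U, u * y ∈ U := Iff.rfl

/-- The multiplicative stabilizer of a nonzero finite-dimensional submodule is an
intermediate field. -/
def stabField (U : Submodule K L) [FiniteDimensional K U] : IntermediateField K L :=
  Subalgebra.toIntermediateField
    { carrier := {y : L | ∀ u ∈ U, u * y ∈ U}
      mul_mem' := fun {a b} ha hb u hu => by
        rw [← mul_assoc]; exact hb _ (ha u hu)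
      add_mem' := fun {a b} ha hb u hu => by
        rw [mul_add]; exact U.add_mem (ha u hu) (hb u hu)
      one_mem' := fun u hu => by rwa [mul_one]
      algebraMap_mem' := fun c u hu => by
        rw [mul_comm, ← Algebra.smul_def]
        exact U.smul_mem c hu }
    (by
      intro y hy
      rcases eq_or_ne y 0 with rfl | hy0
      · simpa using fun u hu => by rw [mul_zero]; exact U.zero_mem
      · intro u hu
        -- mult by y is a bijection of U
        have hmap : ∀ x ∈ U, (LinearMap.mulRight K y) x ∈ U := fun x hx => hy x hx
        set g : U →ₗ[K] U := (LinearMap.mulRight K y).restrict hmap with hg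
        have hginj : Function.Injective g := by
          intro a b hab
          have : (a : L) * y = (b : L) * y := by
            have := congrArg (Subtype.val) hab
            simpa [hg, LinearMap.restrict_apply] using this
          exact Subtype.ext (mul_right_cancel₀ hy0 this)
        have hgsurj : Function.Surjective g :=
          (LinearMap.injective_iff_surjective).mp hginj
        obtain ⟨w, hw⟩ := hgsurj ⟨u, hu⟩
        have hw' : (w : L) * y = u := by
          have := congrArg (Subtype.val) hw
          simpa [hg, LinearMap.restrict_apply] using this
        have : u * y⁻¹ = (w : L) := by
          rw [← hw', mul_assoc, mul_inv_cancel₀ hy0, mul_one]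
        rw [this]; exact w.2)

lemma mem_stabField {U : Submodule K L} [FiniteDimensional K U] {y : L} :
    y ∈ stabField U ↔ ∀ u ∈ U, u * y ∈ U := Iff.rfl

lemma stabField_finiteDimensional (U : Submodule K L) [FiniteDimensional K U]
    (hU : U ≠ ⊥) : FiniteDimensional K (stabField U) := by
  obtain ⟨u₀, hu₀, hu₀0⟩ := Submodule.exists_mem_ne_zero_of_ne_bot hU
  let f : (stabField U : IntermediateField K L) →ₗ[K] U :=
    { toFun := fun y => ⟨u₀ * (y : L), y.2 u₀ hu₀⟩
      map_add' := fun a b => by ext; simp [mul_add]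
      map_smul' := fun c a => by ext; simp [Algebra.mul_smul_comm] }
  have hinj : Function.Injective f := by
    intro a b hab
    have : u₀ * (a : L) = u₀ * (b : L) := by
      have := congrArg (Subtype.val) hab
      simpa [f] using this
    exact Subtype.ext (mul_left_cancel₀ hu₀0 this)
  exact FiniteDimensional.of_injective f hinj


/-- no finite proper intermediate subextension -/
def Dagger (K L : Type*) [Field K] [Field L] [Algebra K L] : Prop :=
  ∀ H : IntermediateField K L, FiniteDimensional K H → H ≠ ⊤ → H = ⊥

lemma mulLeft_injective {x : L} (hx : x ≠ 0) :
    Function.Injective (LinearMap.mulLeft K x) := by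
  intro a b hab
  simpa using mul_left_cancel₀ hx (by simpa using hab)

lemma mulLeft_surjective {x : L} (hx : x ≠ 0) :
    Function.Surjective (LinearMap.mulLeft K x) := by
  intro z
  exact ⟨x⁻¹ * z, by simp [LinearMap.mulLeft_apply, ← mul_assoc, mul_inv_cancel₀ hx]⟩

lemma finrank_map_mulLeft (V : Submodule K L) {x : L} (hx : x ≠ 0) :
    finrank K (Submodule.map (LinearMap.mulLeft K x) V) = finrank K V :=
  (LinearEquiv.finrank_eq (Submodule.equivMapOfInjective _ (mulLeft_injective hx) V)).symm

lemma cd_aux (dag : Dagger K L) :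
    ∀ (N : ℕ) (U V : Submodule K L), FiniteDimensional K U → FiniteDimensional K V →
      finrank K V ≤ N → U ≠ ⊥ → V ≠ ⊥ → U * V ≠ ⊤ →
      finrank K U + finrank K V ≤ finrank K (U * V) + 1 := by
  intro N
  induction N with
  | zero =>
    intro U V hUfd hVfd hVN hU hV hUV
    exfalso
    exact hV (Submodule.finrank_eq_zero.mp (Nat.le_zero.mp hVN))
  | succ N ih =>
    intro U V hUfd hVfd hVN hU hV hUV
    haveI := hUfd; haveI := hVfd
    haveI : FiniteDimensional K (U * V) :=
      (Submodule.fg_iff_finiteDimensional _).mp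
        (Submodule.FG.mul ((Submodule.fg_iff_finiteDimensional _).mpr hUfd)
          ((Submodule.fg_iff_finiteDimensional _).mpr hVfd))
    obtain ⟨u₀, hu₀, hu₀0⟩ := Submodule.exists_mem_ne_zero_of_ne_bot hU
    obtain ⟨v₀, hv₀, hv₀0⟩ := Submodule.exists_mem_ne_zero_of_ne_bot hV
    have hVpos : 1 ≤ finrank K V := by
      by_contra h
      exact hV (Submodule.finrank_eq_zero.mp (by omega))
    rcases eq_or_lt_of_le hVpos with h1 | h2
    · -- base case : finrank V = 1
      have hle : Submodule.map (LinearMap.mulRight K v₀) U ≤ U * V := by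
        rintro z ⟨u, hu, rfl⟩
        exact Submodule.mul_mem_mul hu hv₀
      have hrk : finrank K U = finrank K (Submodule.map (LinearMap.mulRight K v₀) U) := by
        refine LinearEquiv.finrank_eq (Submodule.equivMapOfInjective _ ?_ U)
        intro a b hab
        simpa using mul_right_cancel₀ hv₀0 (by simpa using hab)
      have := Submodule.finrank_mono hle
      omega
    · -- finrank V ≥ 2
      by_cases hstuck : ∃ x : L, x ≠ 0 ∧ V ⊓ Submodule.comap (LinearMap.mulLeft K x) U ≠ ⊥ ∧
          V ⊓ Submodule.comap (LinearMap.mulLeft K x) U ≠ V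
      · obtain ⟨x, hx0, hV'bot, hV'ne⟩ := hstuck
        set f := LinearMap.mulLeft K x with hf
        set V' := V ⊓ Submodule.comap f U with hV'
        set U' := U ⊔ Submodule.map f V with hU'
        haveI : FiniteDimensional K V' := Submodule.finiteDimensional_of_le inf_le_left
        haveI : FiniteDimensional K (Submodule.map f V) := Module.Finite.map _ _
        haveI : FiniteDimensional K U' := Submodule.finiteDimensional_sup _ _
        have hmapV' : Submodule.map f V' = Submodule.map f V ⊓ U := by
          rw [hV', Submodule.map_inf _ (mulLeft_injective hx0), Submodule.map_comap_eq,
            LinearMap.range_eq_top.mpr (mulLeft_surjective hx0), top_inf_eq]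
        have hrkV' : finrank K ↥V' = finrank K ↥(Submodule.map f V ⊓ U) := by
          rw [← hmapV']
          exact LinearEquiv.finrank_eq (Submodule.equivMapOfInjective _ (mulLeft_injective hx0) V')
        have hsum : finrank K ↥U' + finrank K ↥(U ⊓ Submodule.map f V) =
            finrank K U + finrank K ↥(Submodule.map f V) :=
          Submodule.finrank_sup_add_finrank_inf_eq U (Submodule.map f V)
        have hinfc : finrank K ↥(U ⊓ Submodule.map f V) = finrank K ↥(Submodule.map f V ⊓ U) := by
          rw [inf_comm]
        have hmaprk : finrank K (Submodule.map f V) = finrank K V := finrank_map_mulLeft V hx0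
        have hmul : U' * V' ≤ U * V := by
          rw [Submodule.mul_le]
          intro z hz b hb
          obtain ⟨hbV, hbU⟩ := hb
          rcases Submodule.mem_sup.mp hz with ⟨u, hu, w', hw', rfl⟩
          obtain ⟨w, hw, rfl⟩ := hw'
          have h1 : u * b ∈ U * V := Submodule.mul_mem_mul hu hbV
          have h2 : x * b ∈ U := hbU
          have h3 : w * (x * b) ∈ U * V := Submodule.mul_mem_mul_rev h2 hw
          have : (u + f w) * b = u * b + w * (x * b) := by
            simp only [hf, LinearMap.mulLeft_apply]
            ring
          rw [this]
          exact Submodule.add_mem _ h1 h3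
        have hV'lt : V' < V := lt_of_le_of_ne inf_le_left hV'ne
        have hrklt : finrank K V' < finrank K V := Submodule.finrank_lt_finrank_of_lt hV'lt
        have hU'ne : U' ≠ ⊥ := by
          intro h
          apply hU
          rw [← le_bot_iff] at h ⊢
          exact le_trans le_sup_left h
        have hU'V' : U' * V' ≠ ⊤ := by
          intro h
          exact hUV (top_le_iff.mp (h ▸ hmul))
        have := ih U' V' inferInstance inferInstance (by omega) hU'ne hV'bot hU'V'
        have hmono := Submodule.finrank_mono hmul
        omega
      · -- stuck case
        exfalso
        push_neg at hstuck
        have key : ∀ u ∈ U, ∀ v ∈ V, u * (v₀⁻¹ * v) ∈ U := by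
          intro u hu v hv
          rcases eq_or_ne u 0 with rfl | hu0
          · rw [zero_mul]; exact U.zero_mem
          · set x := u * v₀⁻¹ with hxdef
            have hx0 : x ≠ 0 := mul_ne_zero hu0 (inv_ne_zero hv₀0)
            have hxv₀ : x * v₀ = u := by
              rw [hxdef, mul_assoc, inv_mul_cancel₀ hv₀0, mul_one]
            have hv₀mem : v₀ ∈ V ⊓ Submodule.comap (LinearMap.mulLeft K x) U := by
              refine ⟨hv₀, ?_⟩
              show x * v₀ ∈ U
              rw [hxv₀]; exact hu
            have hne : V ⊓ Submodule.comap (LinearMap.mulLeft K x) U ≠ ⊥ := by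
              intro h
              rw [h] at hv₀mem
              exact hv₀0 (by simpa using hv₀mem)
            have heq := hstuck x hx0 hne
            have hvmem : v ∈ V ⊓ Submodule.comap (LinearMap.mulLeft K x) U := by
              rw [heq]; exact hv
            have : x * v ∈ U := hvmem.2
            rwa [hxdef, mul_assoc] at this
        -- so v₀⁻¹ * v is in the stabilizer field for every v ∈ V
        have hFfd : FiniteDimensional K (stabField U) := stabField_finiteDimensional U hU
        have hFne : stabField U ≠ ⊤ := by
          intro h
          apply hUV
          have hUtop : U = ⊤ := by
            rw [eq_top_iff]
            intro z _
            have hz : u₀⁻¹ * z ∈ stabField U := h ▸ IntermediateField.mem_top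
            have := (mem_stabField.mp hz) u₀ hu₀
            rwa [← mul_assoc, mul_inv_cancel₀ hu₀0, one_mul] at this
          rw [eq_top_iff]
          intro z _
          have h1 : z * v₀⁻¹ ∈ U := hUtop ▸ Submodule.mem_top
          have := Submodule.mul_mem_mul h1 hv₀
          rwa [mul_assoc, inv_mul_cancel₀ hv₀0, mul_one] at this
        have hFbot := dag _ hFfd hFne
        have hVle : V ≤ Submodule.span K {v₀} := by
          intro v hv
          have hmem : v₀⁻¹ * v ∈ stabField U := mem_stabField.mpr (fun u hu => key u hu v hv)
          rw [hFbot, IntermediateField.mem_bot] at hmem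
          obtain ⟨c, hc⟩ := hmem
          rw [Submodule.mem_span_singleton]
          refine ⟨c, ?_⟩
          rw [Algebra.smul_def, hc, mul_comm, ← mul_assoc, mul_inv_cancel₀ hv₀0, one_mul]
        haveI : FiniteDimensional K (Submodule.span K ({v₀} : Set L)) :=
          FiniteDimensional.span_of_finite K (Set.finite_singleton v₀)
        have := Submodule.finrank_mono hVle
        rw [finrank_span_singleton hv₀0] at this
        omega


section Rado

variable {W : Type*} [AddCommGroup W] [Module K W] [FiniteDimensional K W]

/-- Hall-type condition for a family of subspaces. -/
def HallCond {n : ℕ} (V : Fin n → Submodule K W) : Prop :=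
  ∀ J : Finset (Fin n), J.card ≤ finrank K ↥(⨆ j ∈ J, V j)

lemma rado_aux :
    ∀ (N : ℕ) {n : ℕ} (V : Fin n → Submodule K W),
      (∑ i, finrank K (V i)) ≤ N → HallCond V →
      ∃ v : Fin n → W, (∀ i, v i ∈ V i) ∧ LinearIndependent (ι := Fin n) K v := by
  intro N
  induction N with
  | zero =>
    intro n V hsum hH
    rcases Nat.eq_zero_or_pos n with rfl | hn
    · exact ⟨fun i => 0, fun i => i.elim0, linearIndependent_empty_type⟩
    · exfalso
      have h1 : ∀ i, 1 ≤ finrank K (V i) := by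
        intro i
        have := hH {i}
        simpa using this
      have : (n : ℕ) ≤ ∑ i, finrank K (V i) := by
        calc (n : ℕ) = ∑ _i : Fin n, 1 := by simp
        _ ≤ ∑ i, finrank K (V i) := Finset.sum_le_sum (fun i _ => h1 i)
      omega
  | succ N ihN =>
    intro n V hsum hH
    classical
    by_cases hsmall : ∀ i, finrank K (V i) ≤ 1
    · -- all subspaces are lines
      have h1 : ∀ i, finrank K (V i) = 1 := by
        intro i
        have h2 := hH {i}
        rw [Finset.iSup_singleton] at h2
        simp only [Finset.card_singleton] at h2
        have := hsmall i
        omega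
      have hex : ∀ i, ∃ x : W, x ∈ V i ∧ x ≠ 0 := by
        intro i
        apply Submodule.exists_mem_ne_zero_of_ne_bot
        intro h
        have := h1 i
        rw [h] at this
        simp at this
      choose v hv hv0 using hex
      have hspan : ∀ i, Submodule.span K {v i} = V i := by
        intro i
        apply Submodule.eq_of_le_of_finrank_le
          ((Submodule.span_singleton_le_iff_mem _ _).mpr (hv i))
        rw [h1 i, finrank_span_singleton (hv0 i)]
      refine ⟨v, hv, ?_⟩
      rw [linearIndependent_iff_card_eq_finrank_span]
      have hr : Submodule.span K (Set.range v) = ⨆ i, V i := by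
        rw [Submodule.span_range_eq_iSup]
        exact iSup_congr hspan
      have hle : finrank K ↥(Submodule.span K (Set.range v)) ≤ n := by
        have h1 := finrank_range_le_card (R := K) v
        simpa [Set.finrank] using h1
      have hge : n ≤ finrank K ↥(Submodule.span K (Set.range v)) := by
        have := hH Finset.univ
        simp only [Finset.card_univ, Fintype.card_fin] at this
        have he : (⨆ j ∈ (Finset.univ : Finset (Fin n)), V j) = ⨆ i, V i := by
          simp
        rw [he] at this
        rw [hr]
        exact this
      have : Fintype.card (Fin n) = finrank K ↥(Submodule.span K (Set.range v)) := by
        simp only [Fintype.card_fin]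
        omega
      exact this.trans (by rfl)
    · -- some subspace has dimension ≥ 2 : split it
      push_neg at hsmall
      obtain ⟨i₀, hi₀⟩ := hsmall
      have hd : 2 ≤ finrank K (V i₀) := hi₀
      set d := finrank K (V i₀) with hdd
      have hdpos : 0 < d := by omega
      let bas := Module.finBasis K ↥(V i₀)
      let g : Fin d → W := fun j => ↑(bas j)
      have hgmem : ∀ j, g j ∈ V i₀ := fun j => (bas j).2
      have hgspan : Submodule.span K (Set.range g) = V i₀ := by
        have : Set.range g = (V i₀).subtype '' Set.range bas := by
          rw [← Set.range_comp]; rfl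
        rw [this, Submodule.span_image, Basis.span_eq, Submodule.map_top,
          Submodule.range_subtype]
      let j₀ : Fin d := ⟨0, by omega⟩
      let j₁ : Fin d := ⟨1, by omega⟩
      have hjne : j₀ ≠ j₁ := by
        intro h
        have := congrArg Fin.val h
        simp [j₀, j₁] at this
      -- two proper pieces covering V i₀
      let V' := Submodule.span K (((Finset.univ.erase j₀).image g : Finset W) : Set W)
      let V'' := Submodule.span K (((Finset.univ.erase j₁).image g : Finset W) : Set W)
      have hV'le : V' ≤ V i₀ := by
        rw [Submodule.span_le]
        intro x hx
        simp only [Finset.coe_image, Set.mem_image] at hx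
        obtain ⟨j, _, rfl⟩ := hx
        exact hgmem j
      have hV''le : V'' ≤ V i₀ := by
        rw [Submodule.span_le]
        intro x hx
        simp only [Finset.coe_image, Set.mem_image] at hx
        obtain ⟨j, _, rfl⟩ := hx
        exact hgmem j
      have hV'rk : finrank K V' ≤ d - 1 := by
        calc finrank K V' ≤ ((Finset.univ.erase j₀).image g).card :=
          finrank_span_finset_le_card _
        _ ≤ (Finset.univ.erase j₀).card := Finset.card_image_le
        _ = d - 1 := by rw [Finset.card_erase_of_mem (Finset.mem_univ _)]; simp
      have hV''rk : finrank K V'' ≤ d - 1 := by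
        calc finrank K V'' ≤ ((Finset.univ.erase j₁).image g).card :=
          finrank_span_finset_le_card _
        _ ≤ (Finset.univ.erase j₁).card := Finset.card_image_le
        _ = d - 1 := by rw [Finset.card_erase_of_mem (Finset.mem_univ _)]; simp
      have huniv : (Finset.univ.erase j₀) ∪ (Finset.univ.erase j₁) =
          (Finset.univ : Finset (Fin d)) := by
        ext i
        simp only [Finset.mem_union, Finset.mem_erase, Finset.mem_univ, and_true, iff_true]
        rcases eq_or_ne i j₀ with rfl | h
        · right; exact hjne
        · left; exact h
      have hsup : V' ⊔ V'' = V i₀ := by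
        rw [← hgspan, ← Submodule.span_union, ← Finset.coe_union, ← Finset.image_union, huniv]
        congr 1
        simp
      -- the recursion helper
      have hrec : ∀ Vnew : Submodule K W, Vnew ≤ V i₀ → finrank K Vnew ≤ d - 1 →
          HallCond (Function.update V i₀ Vnew) →
          ∃ v : Fin n → W, (∀ i, v i ∈ V i) ∧ LinearIndependent (ι := Fin n) K v := by
        intro Vnew hle hrk hHnew
        have hsum' : (∑ i, finrank K ((Function.update V i₀ Vnew) i)) ≤ N := by
          have hfun : ∀ i, finrank K ↥(Function.update V i₀ Vnew i) =
              Function.update (fun i => finrank K ↥(V i)) i₀ (finrank K ↥Vnew) i := by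
            intro i
            rcases eq_or_ne i i₀ with rfl | h
            · rw [Function.update_self, Function.update_self]
            · rw [Function.update_of_ne h, Function.update_of_ne h]
          rw [Finset.sum_congr rfl (fun i _ => hfun i),
            Finset.sum_update_of_mem (Finset.mem_univ i₀), Finset.sdiff_singleton_eq_erase]
          have h2 : (∑ i, finrank K (V i)) =
              finrank K (V i₀) + ∑ i ∈ Finset.univ.erase i₀, finrank K (V i) := by
            rw [← Finset.sum_erase_add _ _ (Finset.mem_univ i₀)]
            ring
          omega
        obtain ⟨v, hvmem, hvind⟩ := ihN (Function.update V i₀ Vnew) hsum' hHnew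
        refine ⟨v, fun i => ?_, hvind⟩
        rcases eq_or_ne i i₀ with rfl | h
        · have := hvmem i
          rw [Function.update_self] at this
          exact hle this
        · have := hvmem i
          rwa [Function.update_of_ne h] at this
      by_cases hH' : HallCond (Function.update V i₀ V')
      · exact hrec V' hV'le hV'rk hH'
      by_cases hH'' : HallCond (Function.update V i₀ V'')
      · exact hrec V'' hV''le hV''rk hH''
      -- both fail : contradiction with submodularity
      exfalso
      simp only [HallCond, not_forall, not_le] at hH' hH''
      obtain ⟨J₁, hJ₁⟩ := hH'
      obtain ⟨J₂, hJ₂⟩ := hH''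
      -- i₀ must lie in both violating sets
      have hupdate_sup : ∀ (Vnew : Submodule K W) (J : Finset (Fin n)), i₀ ∉ J →
          (⨆ j ∈ J, (Function.update V i₀ Vnew) j) = ⨆ j ∈ J, V j := by
        intro Vnew J hJ
        refine iSup_congr fun j => ?_
        rcases eq_or_ne j i₀ with rfl | h
        · rw [iSup_neg hJ, iSup_neg hJ]
        · rw [Function.update_of_ne h]
      have hmem₁ : i₀ ∈ J₁ := by
        by_contra h
        rw [hupdate_sup V' J₁ h] at hJ₁
        exact absurd (hH J₁) (by omega)
      have hmem₂ : i₀ ∈ J₂ := by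
        by_contra h
        rw [hupdate_sup V'' J₂ h] at hJ₂
        exact absurd (hH J₂) (by omega)
      have hsplit : ∀ (Vnew : Submodule K W) (J : Finset (Fin n)) (hi : i₀ ∈ J),
          (⨆ j ∈ J, (Function.update V i₀ Vnew) j) =
            Vnew ⊔ ⨆ j ∈ J.erase i₀, V j := by
        intro Vnew J hi
        conv_lhs => rw [← Finset.insert_erase hi]
        rw [Finset.iSup_insert, Function.update_self]
        congr 1
        refine iSup_congr fun j => ?_
        rcases eq_or_ne j i₀ with rfl | h
        · rw [iSup_neg (Finset.notMem_erase _ _), iSup_neg (Finset.notMem_erase _ _)]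
        · rw [Function.update_of_ne h]
      rw [hsplit V' J₁ hmem₁] at hJ₁
      rw [hsplit V'' J₂ hmem₂] at hJ₂
      have hcard₁ : J₁.card = (J₁.erase i₀).card + 1 := by
        rw [Finset.card_erase_of_mem hmem₁]
        have : 1 ≤ J₁.card := Finset.card_pos.mpr ⟨i₀, hmem₁⟩
        omega
      have hcard₂ : J₂.card = (J₂.erase i₀).card + 1 := by
        rw [Finset.card_erase_of_mem hmem₂]
        have : 1 ≤ J₂.card := Finset.card_pos.mpr ⟨i₀, hmem₂⟩
        omega
      have hX : finrank K ↥(V' ⊔ ⨆ j ∈ J₁.erase i₀, V j) ≤ (J₁.erase i₀).card := by omega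
      have hY : finrank K ↥(V'' ⊔ ⨆ j ∈ J₂.erase i₀, V j) ≤ (J₂.erase i₀).card := by omega
      -- submodularity
      have hsubmod := Submodule.finrank_sup_add_finrank_inf_eq
        (V' ⊔ ⨆ j ∈ J₁.erase i₀, V j) (V'' ⊔ ⨆ j ∈ J₂.erase i₀, V j)
      -- lower bound for the sup
      have hXY : (V' ⊔ ⨆ j ∈ J₁.erase i₀, V j) ⊔ (V'' ⊔ ⨆ j ∈ J₂.erase i₀, V j) =
          ⨆ j ∈ insert i₀ ((J₁.erase i₀) ∪ (J₂.erase i₀)), V j := by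
        rw [Finset.iSup_insert, Finset.iSup_union]
        rw [sup_sup_sup_comm, hsup]
      have hcard_ins : (insert i₀ ((J₁.erase i₀) ∪ (J₂.erase i₀))).card =
          ((J₁.erase i₀) ∪ (J₂.erase i₀)).card + 1 := by
        rw [Finset.card_insert_of_notMem]
        simp
      have hsupge : ((J₁.erase i₀) ∪ (J₂.erase i₀)).card + 1 ≤
          finrank K ↥((V' ⊔ ⨆ j ∈ J₁.erase i₀, V j) ⊔ (V'' ⊔ ⨆ j ∈ J₂.erase i₀, V j)) := by
        rw [hXY]
        have := hH (insert i₀ ((J₁.erase i₀) ∪ (J₂.erase i₀)))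
        omega
      -- lower bound for the inf
      have hC : (⨆ j ∈ (J₁.erase i₀) ∩ (J₂.erase i₀), V j) ≤
          (V' ⊔ ⨆ j ∈ J₁.erase i₀, V j) ⊓ (V'' ⊔ ⨆ j ∈ J₂.erase i₀, V j) := by
        refine le_inf ?_ ?_
        · exact le_trans (biSup_mono fun j hj => (Finset.mem_inter.mp hj).1) le_sup_right
        · exact le_trans (biSup_mono fun j hj => (Finset.mem_inter.mp hj).2) le_sup_right
      have hinfge : ((J₁.erase i₀) ∩ (J₂.erase i₀)).card ≤
          finrank K ↥((V' ⊔ ⨆ j ∈ J₁.erase i₀, V j) ⊓ (V'' ⊔ ⨆ j ∈ J₂.erase i₀, V j)) := by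
        have := hH ((J₁.erase i₀) ∩ (J₂.erase i₀))
        exact le_trans this (Submodule.finrank_mono hC)
      have hcards : ((J₁.erase i₀) ∪ (J₂.erase i₀)).card + ((J₁.erase i₀) ∩ (J₂.erase i₀)).card =
          (J₁.erase i₀).card + (J₂.erase i₀).card :=
        Finset.card_union_add_card_inter _ _
      omega

end Rado


lemma isBasisOfSubspace_finBasis (P : Submodule K L) [FiniteDimensional K P] :
    IsBasisOfSubspace (finrank K P) P (fun i => ((Module.finBasis K P) i : L)) := by
  constructor
  · exact (Module.finBasis K P).linearIndependent.map' P.subtype (Submodule.ker_subtype P)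
  · have h : Set.range (fun i => ((Module.finBasis K P) i : L)) =
        P.subtype '' Set.range (Module.finBasis K P) := by
      rw [← Set.range_comp]; rfl
    rw [h, Submodule.span_image, Basis.span_eq, Submodule.map_top, Submodule.range_subtype]

/-- Transfer between the two coercions of an intermediate field. -/
def interFieldSubmoduleEquiv (H : IntermediateField K L) :
    (Subalgebra.toSubmodule H.toSubalgebra : Submodule K L) ≃ₗ[K] H where
  toFun x := ⟨x.1, by
    have := x.2
    rwa [Subalgebra.mem_toSubmodule, IntermediateField.mem_toSubalgebra] at this⟩
  invFun x := ⟨x.1, by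
    rw [Subalgebra.mem_toSubmodule, IntermediateField.mem_toSubalgebra]
    exact x.2⟩
  map_add' _ _ := rfl
  map_smul' _ _ := rfl
  left_inv _ := rfl
  right_inv _ := rfl

lemma dagger_of_hloc (hloc : LinearLocalMatchingProperty K L) : Dagger K L := by
  intro H hHfd hHtop
  by_contra hHbot
  set M := Subalgebra.toSubmodule H.toSubalgebra with hM
  haveI : FiniteDimensional K M := (interFieldSubmoduleEquiv H).symm.finiteDimensional
  have hmemM : ∀ {z : L}, z ∈ M ↔ z ∈ H := by
    intro z
    rw [hM, Subalgebra.mem_toSubmodule, IntermediateField.mem_toSubalgebra]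
  obtain ⟨x, hxH, hxK⟩ : ∃ x ∈ H, x ∉ Set.range (algebraMap K L) := by
    by_contra hcon
    push_neg at hcon
    apply hHbot
    refine le_antisymm ?_ bot_le
    intro z hz
    rw [IntermediateField.mem_bot]
    exact hcon z hz
  have hx0 : x ≠ 0 := by
    rintro rfl
    exact hxK ⟨0, by simp⟩
  have hpair : LinearIndependent K ![(1 : L), x] := by
    rw [LinearIndependent.pair_iff' one_ne_zero]
    intro c hc
    exact hxK ⟨c, by rw [Algebra.algebraMap_eq_smul_one]; exact hc⟩
  set d := finrank K M with hd
  have hspan2 : Submodule.span K {(1:L), x} ≤ M := by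
    rw [Submodule.span_le]
    intro z hz
    rcases Set.mem_insert_iff.mp hz with rfl | hz
    · exact hmemM.mpr H.one_mem
    · rw [Set.mem_singleton_iff] at hz
      subst hz
      exact hmemM.mpr hxH
  have h2span : finrank K (Submodule.span K {(1:L), x}) = 2 := by
    have h := finrank_span_eq_card hpair
    have hr : Set.range ![(1:L), x] = {(1:L), x} := by
      simp only [Matrix.range_cons, Matrix.range_empty, Set.union_empty, Set.union_singleton]
      exact Set.pair_comm x 1
    rw [hr] at h
    simpa using h
  haveI : FiniteDimensional K (Submodule.span K ({(1:L), x} : Set L)) :=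
    FiniteDimensional.span_of_finite K (by simp)
  have hd2 : 2 ≤ d := by
    rw [hd, ← h2span]
    exact Submodule.finrank_mono hspan2
  have hMne : M ≠ ⊤ := by
    intro hMtop
    apply hHtop
    rw [eq_top_iff]
    intro z _
    exact hmemM.mp (hMtop ▸ Submodule.mem_top)
  obtain ⟨z₀, hz₀⟩ : ∃ z₀ : L, z₀ ∉ M := by
    by_contra hcon
    push_neg at hcon
    exact hMne (eq_top_iff.mpr fun z _ => hcon z)
  have hz₀0 : z₀ ≠ 0 := fun h => hz₀ (h ▸ M.zero_mem)
  set P := M ⊔ Submodule.span K {z₀} with hP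
  haveI : FiniteDimensional K (Submodule.span K ({z₀} : Set L)) :=
    FiniteDimensional.span_of_finite K (Set.finite_singleton _)
  haveI : FiniteDimensional K P := Submodule.finiteDimensional_sup _ _
  have hMinf : M ⊓ Submodule.span K {z₀} = ⊥ := by
    rw [eq_bot_iff]
    intro z hz
    obtain ⟨hzM, hzs⟩ := Submodule.mem_inf.mp hz
    rw [Submodule.mem_span_singleton] at hzs
    obtain ⟨c, rfl⟩ := hzs
    rcases eq_or_ne c 0 with rfl | hc
    · simp
    · exfalso
      apply hz₀
      have := M.smul_mem c⁻¹ hzM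
      rwa [inv_smul_smul₀ hc] at this
  have hrkP : finrank K P = d + 1 := by
    have h := Submodule.finrank_sup_add_finrank_inf_eq M (Submodule.span K {z₀})
    rw [hMinf, finrank_span_singleton hz₀0] at h
    rw [hP]
    simp only [finrank_bot] at h
    omega
  have hspanP : Submodule.span K {(1:L), x} ≤ P := le_trans hspan2 le_sup_left
  obtain ⟨C', hC'⟩ := Submodule.exists_isCompl
    (Submodule.comap P.subtype (Submodule.span K {(1:L), x}))
  set C := Submodule.map P.subtype C' with hC
  haveI : FiniteDimensional K C := Module.Finite.map _ _
  have hCinf : Submodule.span K {(1:L), x} ⊓ C = ⊥ := by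
    rw [eq_bot_iff]
    intro z hz
    obtain ⟨hz1, hz2⟩ := Submodule.mem_inf.mp hz
    rw [hC] at hz2
    obtain ⟨w, hw, rfl⟩ := hz2
    have hwW : w ∈ (Submodule.comap P.subtype (Submodule.span K {(1:L), x})) ⊓ C' :=
      ⟨hz1, hw⟩
    rw [hC'.inf_eq_bot] at hwW
    rw [Submodule.mem_bot] at hwW
    simp [hwW]
  have hmapW : Submodule.map P.subtype
      (Submodule.comap P.subtype (Submodule.span K {(1:L), x})) =
      Submodule.span K {(1:L), x} := by
    rw [Submodule.map_comap_subtype, inf_eq_right.mpr hspanP]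
  have hCsup : Submodule.span K {(1:L), x} ⊔ C = P := by
    rw [← hmapW, hC, ← Submodule.map_sup, hC'.sup_eq_top, Submodule.map_top,
      Submodule.range_subtype]
  have hrkC : finrank K C + 2 = d + 1 := by
    have h := Submodule.finrank_sup_add_finrank_inf_eq (Submodule.span K {(1:L), x}) C
    rw [hCsup, hCinf, hrkP, h2span] at h
    simp only [finrank_bot] at h
    omega
  set B' := Submodule.span K {x} ⊔ C with hB'
  haveI : FiniteDimensional K (Submodule.span K ({x} : Set L)) :=
    FiniteDimensional.span_of_finite K (Set.finite_singleton _)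
  haveI : FiniteDimensional K B' := Submodule.finiteDimensional_sup _ _
  have hxspanle : Submodule.span K ({x} : Set L) ≤ Submodule.span K {(1:L), x} :=
    Submodule.span_mono (by simp)
  have hB'inf : Submodule.span K ({x} : Set L) ⊓ C = ⊥ := by
    rw [eq_bot_iff]
    intro z hz
    obtain ⟨hz1, hz2⟩ := Submodule.mem_inf.mp hz
    have : z ∈ Submodule.span K {(1:L), x} ⊓ C := ⟨hxspanle hz1, hz2⟩
    rw [hCinf] at this
    exact this
  have hrkB' : finrank K B' = d := by
    have h := Submodule.finrank_sup_add_finrank_inf_eq (Submodule.span K ({x} : Set L)) C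
    rw [hB'inf, finrank_span_singleton hx0] at h
    simp only [finrank_bot] at h
    rw [hB']
    omega
  have h1B' : (1 : L) ∉ B' := by
    intro h1
    rcases Submodule.mem_sup.mp h1 with ⟨y, hy, w, hw, hywsum⟩
    rw [Submodule.mem_span_singleton] at hy
    obtain ⟨c, rfl⟩ := hy
    have hw' : w = 1 - c • x := by
      rw [eq_sub_iff_add_eq, add_comm]
      exact hywsum
    have h1mem : (1:L) ∈ Submodule.span K {(1:L), x} :=
      Submodule.subset_span (Set.mem_insert _ _)
    have hxmem : x ∈ Submodule.span K {(1:L), x} :=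
      Submodule.subset_span (Set.mem_insert_of_mem _ rfl)
    have hwspan : w ∈ Submodule.span K {(1:L), x} := by
      rw [hw']
      exact Submodule.sub_mem _ h1mem (Submodule.smul_mem _ c hxmem)
    have hwbot : w ∈ Submodule.span K {(1:L), x} ⊓ C := ⟨hwspan, hw⟩
    rw [hCinf, Submodule.mem_bot] at hwbot
    rw [hwbot, add_zero] at hywsum
    rcases eq_or_ne c 0 with rfl | hc
    · rw [zero_smul] at hywsum
      exact one_ne_zero hywsum.symm
    · apply hxK
      refine ⟨c⁻¹, ?_⟩
      rw [Algebra.algebraMap_eq_smul_one, ← hywsum, smul_smul, inv_mul_cancel₀ hc, one_smul]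
  have hxB' : x ∈ B' := Submodule.mem_sup_left (Submodule.mem_span_singleton_self x)
  have hsm := hloc d (by omega) M B' hd.symm hrkB' h1B'
  have hMB'ne : Subalgebra.toSubmodule H.toSubalgebra ⊓ B' ≠ ⊥ := by
    intro hbot
    have hxin : x ∈ Subalgebra.toSubmodule H.toSubalgebra ⊓ B' := ⟨hmemM.mpr hxH, hxB'⟩
    rw [hbot, Submodule.mem_bot] at hxin
    exact hx0 hxin
  obtain ⟨Atil, hAle, hAne, hAM⟩ := hsm H hHtop hMB'ne
    ⟨0, M.zero_mem, fun h _ => by rw [zero_mul]; exact M.zero_mem⟩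
  haveI : FiniteDimensional K Atil := Submodule.finiteDimensional_of_le hAle
  have hm1 : 1 ≤ finrank K Atil := by
    by_contra h
    exact hAne (Submodule.finrank_eq_zero.mp (by omega))
  obtain ⟨b, hbB, hbprod⟩ := hAM (finrank K Atil) _ (isBasisOfSubspace_finBasis Atil)
  set i0 : Fin (finrank K Atil) := ⟨0, hm1⟩ with hi0
  have hb0 : b i0 ∈ Subalgebra.toSubmodule H.toSubalgebra ⊓ B' := by
    rw [← hbB.2]
    exact Submodule.subset_span (Set.mem_range_self _)
  have ha0 : ((Module.finBasis K Atil) i0 : L) ∈ M :=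
    hAle ((Module.finBasis K Atil) i0).2
  exact hbprod i0 (hmemM.mpr (H.mul_mem (hmemM.mp ha0) (hmemM.mp hb0.1)))

end MatchAux

/-- If every element of `L` algebraic over `K` is separable over `K` and `K ⊂ L` has the
linear local matching property, then it has the linear matching property. -/
theorem linear_local_matching_implies_linear_matching {K L : Type*} [Field K] [Field L]
    [Algebra K L] (hsep : ∀ x : L, IsAlgebraic K x → IsSeparable K x)
    (hloc : LinearLocalMatchingProperty K L) :
    LinearMatchingProperty K L := by
  classical
  intro n hn A B hA hB h1B
  intro m a ha
  have dag := MatchAux.dagger_of_hloc hloc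
  have hAm : finrank K A = m := by
    rw [← ha.2]
    have h := finrank_span_eq_card ha.1
    simpa using h
  have hBm : finrank K B = m := by rw [hB, ← hA, hAm]
  have hm1 : 1 ≤ m := by
    have : m = n := by rw [← hAm, hA]
    omega
  haveI hBfd : FiniteDimensional K B := FiniteDimensional.of_finrank_pos (by omega)
  haveI hAfd : FiniteDimensional K A := FiniteDimensional.of_finrank_pos (by omega)
  have hAtop : A ≠ ⊤ := by
    intro htop
    haveI : FiniteDimensional K (⊤ : Submodule K L) := htop ▸ hAfd
    haveI : FiniteDimensional K L := Module.Finite.equiv (Submodule.topEquiv (R := K) (M := L))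
    have hfl : finrank K L = m := by
      rw [← finrank_top K L, ← htop, hAm]
    have hBtop : B = ⊤ := Submodule.eq_top_of_finrank_eq (by rw [hBm, hfl])
    exact h1B (hBtop ▸ Submodule.mem_top)
  set S : Fin m → Submodule K L :=
    fun i => B ⊓ Submodule.comap (LinearMap.mulLeft K (a i)) A with hS
  have hSleB : ∀ i, S i ≤ B := fun i => inf_le_left
  -- Hall condition in L, via the Cauchy-Davenport inequality
  have hHallL : ∀ J : Finset (Fin m), J.Nonempty →
      finrank K ↥(⨅ j ∈ J, S j) + J.card ≤ m := by
    intro J hJne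
    obtain ⟨j₀, hj₀⟩ := hJne
    have hTle : (⨅ j ∈ J, S j) ≤ B :=
      le_trans (iInf_le_of_le j₀ (iInf_le_of_le hj₀ le_rfl)) (hSleB j₀)
    haveI : FiniteDimensional K ↥(⨅ j ∈ J, S j) := Submodule.finiteDimensional_of_le hTle
    by_contra hcon
    push_neg at hcon
    set T := ⨅ j ∈ J, S j with hT
    set t := finrank K T with ht
    set SS := Submodule.span K (Set.range (fun j : ↑J => a ↑j)) with hSS
    haveI : FiniteDimensional K SS :=
      FiniteDimensional.span_of_finite K (Set.finite_range _)
    have hSSrk : finrank K SS = J.card := by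
      have hind : LinearIndependent K (fun j : ↑J => a ↑j) :=
        ha.1.comp _ Subtype.val_injective
      rw [hSS, finrank_span_eq_card hind]
      exact Fintype.card_coe J
    have hSSle : SS ≤ A := by
      rw [hSS, Submodule.span_le]
      rintro z ⟨j, rfl⟩
      rw [← ha.2]
      exact Submodule.subset_span (Set.mem_range_self _)
    have hSSne : SS ≠ ⊥ := by
      intro h
      have hmem : a j₀ ∈ SS := Submodule.subset_span ⟨⟨j₀, hj₀⟩, rfl⟩
      rw [h, Submodule.mem_bot] at hmem
      exact ha.1.ne_zero j₀ hmem
    have h1T : (1 : L) ∉ T := fun h => h1B (hTle h)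
    set T2 := Submodule.span K {(1:L)} ⊔ T with hT2
    haveI : FiniteDimensional K (Submodule.span K ({(1:L)} : Set L)) :=
      FiniteDimensional.span_of_finite K (Set.finite_singleton _)
    haveI : FiniteDimensional K T2 := Submodule.finiteDimensional_sup _ _
    have hT2inf : Submodule.span K ({(1:L)} : Set L) ⊓ T = ⊥ := by
      rw [eq_bot_iff]
      intro z hz
      obtain ⟨hz1, hz2⟩ := Submodule.mem_inf.mp hz
      rw [Submodule.mem_span_singleton] at hz1
      obtain ⟨c, rfl⟩ := hz1
      rcases eq_or_ne c 0 with rfl | hc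
      · simp
      · exfalso
        apply h1T
        have hmem := T.smul_mem c⁻¹ hz2
        rwa [smul_smul, inv_mul_cancel₀ hc, one_smul] at hmem
    have hT2rk : finrank K T2 = t + 1 := by
      have h := Submodule.finrank_sup_add_finrank_inf_eq
        (Submodule.span K ({(1:L)} : Set L)) T
      rw [hT2inf, finrank_span_singleton (one_ne_zero)] at h
      simp only [finrank_bot] at h
      rw [hT2]
      omega
    have hT2ne : T2 ≠ ⊥ := by
      intro h
      have hmem : (1:L) ∈ T2 := Submodule.mem_sup_left (Submodule.mem_span_singleton_self 1)
      rw [h, Submodule.mem_bot] at hmem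
      exact one_ne_zero hmem
    have hmulle : SS * T2 ≤ A := by
      rw [Submodule.mul_le]
      intro u hu v hv
      rcases Submodule.mem_sup.mp hv with ⟨y, hy, w, hw, rfl⟩
      rw [Submodule.mem_span_singleton] at hy
      obtain ⟨c, rfl⟩ := hy
      have huw : u * w ∈ A := by
        have hcomap : SS ≤ Submodule.comap (LinearMap.mulRight K w) A := by
          rw [hSS, Submodule.span_le]
          rintro z ⟨j, rfl⟩
          have hwS : w ∈ S ↑j :=
            (iInf_le_of_le ↑j (iInf_le_of_le j.2 le_rfl) : T ≤ S ↑j) hw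
          exact (Submodule.mem_inf.mp hwS).2
        exact hcomap hu
      have heq : u * (c • 1 + w) = c • u + u * w := by
        rw [mul_add, mul_smul_comm, mul_one]
      rw [heq]
      exact A.add_mem (A.smul_mem c (hSSle hu)) huw
    have hmulne : SS * T2 ≠ ⊤ := fun h => hAtop (top_le_iff.mp (h ▸ hmulle))
    have hcd := MatchAux.cd_aux dag (finrank K T2) SS T2 inferInstance inferInstance
      le_rfl hSSne hT2ne hmulne
    have hmono := Submodule.finrank_mono hmulle
    rw [hSSrk, hT2rk] at hcd
    rw [hAm] at hmono
    omega
  -- dualize inside B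
  set S' : Fin m → Submodule K ↥B := fun i => Submodule.comap B.subtype (S i) with hS'
  have hHallS' : ∀ J : Finset (Fin m), J.Nonempty →
      finrank K ↥(⨅ j ∈ J, S' j) + J.card ≤ m := by
    intro J hJne
    obtain ⟨j₀, hj₀⟩ := hJne
    have hTle : (⨅ j ∈ J, S j) ≤ B :=
      le_trans (iInf_le_of_le j₀ (iInf_le_of_le hj₀ le_rfl)) (hSleB j₀)
    have hcomap : (⨅ j ∈ J, S' j) = Submodule.comap B.subtype (⨅ j ∈ J, S j) := by
      rw [hS']
      simp only [Submodule.comap_iInf]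
    have heq : finrank K ↥(⨅ j ∈ J, S' j) = finrank K ↥(⨅ j ∈ J, S j) := by
      rw [hcomap]
      exact LinearEquiv.finrank_eq (Submodule.comapSubtypeEquivOfLe hTle)
    rw [heq]
    exact hHallL J ⟨j₀, hj₀⟩
  set V : Fin m → Submodule K (Module.Dual K ↥B) :=
    fun i => (S' i).dualAnnihilator with hV
  have hrkDual : finrank K (Module.Dual K ↥B) = m := by
    rw [Subspace.dual_finrank_eq]
    exact hBm
  have hHallDual : MatchAux.HallCond V := by
    intro J
    rcases J.eq_empty_or_nonempty with rfl | hJne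
    · simp
    · have hsupann : (⨆ j ∈ J, V j) = (⨅ j ∈ J, S' j).dualAnnihilator := by
        rw [hV]
        rw [iSup_subtype', iInf_subtype']
        exact (Subspace.dualAnnihilator_iInf_eq (fun x : {j // j ∈ J} => S' x)).symm
      have hann : finrank K ↥(⨅ j ∈ J, S' j).dualAnnihilator
          + finrank K ↥(⨅ j ∈ J, S' j) = m := by
        have h1 := LinearEquiv.finrank_eq (R := K) (M := (↥B ⧸ (⨅ j ∈ J, S' j)))
          (N := {x // x ∈ (⨅ j ∈ J, S' j).dualAnnihilator})
          (Subspace.quotEquivAnnihilator (⨅ j ∈ J, S' j))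
        have h2 := Submodule.finrank_quotient_add_finrank (⨅ j ∈ J, S' j)
        rw [hBm] at h2
        omega
      have hH := hHallS' J hJne
      rw [hsupann]
      omega
  obtain ⟨φ, hφmem, hφind⟩ := MatchAux.rado_aux (∑ i, finrank K (V i)) V le_rfl hHallDual
  haveI : Nonempty (Fin m) := ⟨⟨0, hm1⟩⟩
  let Φ : Basis (Fin m) K (Module.Dual K ↥B) :=
    basisOfLinearIndependentOfCardEqFinrank hφind (by simp [hrkDual])
  have hΦ : ⇑Φ = φ := coe_basisOfLinearIndependentOfCardEqFinrank hφind _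
  let bb : Basis (Fin m) K ↥B := Φ.dualBasis.map (Module.evalEquiv K ↥B).symm
  let b : Fin m → L := fun j => ↑(bb j)
  have hrepr_eq : ∀ (x' : ↥B) (i : Fin m), bb.repr x' i = φ i x' := by
    intro x' i
    show ((Φ.dualBasis.map (Module.evalEquiv K ↥B).symm).repr x') i = φ i x'
    rw [Basis.map_repr, LinearEquiv.trans_apply, LinearEquiv.symm_symm,
      Basis.dualBasis_repr, Module.evalEquiv_apply, Module.Dual.eval_apply, hΦ]
  refine ⟨b, ⟨?_, ?_⟩, ?_⟩
  · exact bb.linearIndependent.map' B.subtype (Submodule.ker_subtype B)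
  · have h : Set.range b = B.subtype '' Set.range bb := by rw [← Set.range_comp]; rfl
    rw [h, Submodule.span_image, Basis.span_eq, Submodule.map_top, Submodule.range_subtype]
  · -- the matching property
    intro x hx i hmul
    set x' : ↥B := ⟨x, hx⟩ with hx'def
    have hx'S : x' ∈ S' i := by
      rw [hS']
      show (x : L) ∈ S i
      exact Submodule.mem_inf.mpr ⟨hx, hmul⟩
    have hφx : φ i x' = 0 := by
      have hm := hφmem i
      rw [hV] at hm
      exact (Submodule.mem_dualAnnihilator (φ i)).mp hm x' hx'S
    have hrepr0 : bb.repr x' i = 0 := by rw [hrepr_eq x' i, hφx]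
    have hxsum : x' = ∑ j ∈ Finset.univ.erase i, bb.repr x' j • bb j := by
      have hsum := bb.sum_repr x'
      rw [Finset.sum_erase _ (by rw [hrepr0, zero_smul])]
      exact hsum.symm
    have hxval : x = ∑ j ∈ Finset.univ.erase i, bb.repr x' j • b j := by
      have := congrArg (B.subtype) hxsum
      rw [map_sum] at this
      simp only [map_smul, Submodule.coe_subtype] at this
      exact this
    rw [hxval]
    apply Submodule.sum_mem
    intro j hj
    apply Submodule.smul_mem
    apply Submodule.subset_span
    exact ⟨j, Set.mem_compl_singleton_iff.mpr (Finset.mem_erase.mp hj).1, rfl⟩
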